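/- arXiv:1705.10480 — 5 statements merged into one kernel-verified Lean document; each statement's English description precedes it below -/
import Mathlib

section
/- There exist an OBDM specification I, a source query Q_s, and an ontology query Q_g such that Q_g is a sound source-to-target rewriting of Q_s under the certain-answers-based semantics but not a sound source-to-target rewriting of Q_s under the model-based semantics. Concretely: the ontology has one binary predicate G and no axioms; the source schema has a binary relation r1 and unary relation r2; the mapping contains r1(x,y) → G(x,y) and r2(x) → ∃Y.G(x,Y); Q_s(w) = ∃Z. r1(Z,w) and Q_g(w) = ∃Z. G(Z,w). Then for every source database C and sem^C(I) ≠ ∅, cert(Q_g,I,C) ⊆ Q_s^C, but there exist C and B ∈ sem^C(I) with Q_g^B ⊄ Q_s^C. -/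
/-- A source database: finite binary relation `r1` and finite unary relation
`r2` over the countable set ℕ of constants. -/
structure SrcDB7 where
  r1 : Finset (ℕ × ℕ)
  r2 : Finset ℕ

/-- sem^C(I): models G (binary relations over constants) such that
r1^C ⊆ G and every c ∈ r2^C has a G-successor. -/
def sem7 (C : SrcDB7) : Set (Set (ℕ × ℕ)) :=
  {G | (↑C.r1 : Set (ℕ × ℕ)) ⊆ G ∧ ∀ c ∈ C.r2, ∃ d, (c, d) ∈ G}

/-- Q_s(w) = ∃Z. r1(Z,w). -/
def Qs7 (C : SrcDB7) : Set ℕ := {w | ∃ z, (z, w) ∈ C.r1}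

/-- Q_g(w) = ∃Z. G(Z,w). -/
def Qg7 (G : Set (ℕ × ℕ)) : Set ℕ := {w | ∃ z, (z, w) ∈ G}

/-- Q_g is a sound s-to-t rewriting of Q_s under the
certain-answers-based semantics, but not under the model-based semantics. -/
theorem sound_cert_but_not_sound_model :
    (∀ C : SrcDB7, (sem7 C).Nonempty → (⋂ G ∈ sem7 C, Qg7 G) ⊆ Qs7 C) ∧
    (∃ (C : SrcDB7), ∃ G ∈ sem7 C, ¬ Qg7 G ⊆ Qs7 C) := by
  constructor
  · intro C _ w hw
    have hmem : (↑C.r1 : Set (ℕ × ℕ)) ∪ {p | p.2 = w + 1} ∈ sem7 C := by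
      refine ⟨fun p hp => Or.inl hp, fun c _ => ⟨w + 1, Or.inr rfl⟩⟩
    have := Set.mem_iInter₂.mp hw _ hmem
    obtain ⟨z, hz⟩ := this
    rcases hz with h | h
    · exact ⟨z, h⟩
    · exact absurd h (by simp)
  · refine ⟨⟨∅, {0}⟩, {(0, 0)}, ⟨by simp, fun c hc => ⟨0, by simp at hc; simp [hc]⟩⟩, ?_⟩
    intro h
    obtain ⟨z, hz⟩ := h ⟨0, rfl⟩
    simp at hz
end

section
/- Restricting the model-based semantics to minimal models does not restore soundness in the example: with mapping r1(x,y) → G(x,y) and r2(x) → ∃Y.G(x,Y), there exist a source database C and a minimal model B ∈ sem^C(I) (i.e., no B' ∈ sem^C(I) with B' ⊊ B) such that Q_g^B ⊄ Q_s^C, where Q_s(w) = ∃Z.r1(Z,w) and Q_g(w) = ∃Z.G(Z,w). In particular, C with r1^C = {(a,b)}, r2^C = {c}, and B with G^B = {(a,b),(c,d)} (a,b,c,d distinct constants) witnesses this: B is a minimal element of sem^C(I) and d ∈ Q_g^B but d ∉ Q_s^C. -/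
/-- A source database: binary relation `r1` and unary relation `r2` over the
countably infinite set ℕ of constants. -/
structure SrcDB9 where
  r1 : Set (ℕ × ℕ)
  r2 : Set ℕ

/-- sem^C(I). -/
def sem9 (C : SrcDB9) : Set (Set (ℕ × ℕ)) :=
  {G | C.r1 ⊆ G ∧ ∀ c ∈ C.r2, ∃ d, (c, d) ∈ G}

/-- Q_s(w) = ∃Z. r1(Z,w). -/
def Qs9 (C : SrcDB9) : Set ℕ := {w | ∃ z, (z, w) ∈ C.r1}

/-- Q_g(w) = ∃Z. G(Z,w). -/
def Qg9 (G : Set (ℕ × ℕ)) : Set ℕ := {w | ∃ z, (z, w) ∈ G}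

/-- restricting to minimal models does not restore soundness:
for distinct constants a,b,c,d, the database C with r1^C = {(a,b)},
r2^C = {c} and the model B with G^B = {(a,b),(c,d)} witness that B is a
minimal element of sem^C(I), yet d ∈ Q_g^B while d ∉ Q_s^C (so Q_g^B ⊄ Q_s^C). -/
theorem minimal_models_not_sound
    (a b c d : ℕ) (hab : a ≠ b) (hac : a ≠ c) (had : a ≠ d)
    (hbc : b ≠ c) (hbd : b ≠ d) (hcd : c ≠ d) :
    let C : SrcDB9 := ⟨{(a, b)}, {c}⟩
    let B : Set (ℕ × ℕ) := {(a, b), (c, d)}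
    B ∈ sem9 C ∧
    (∀ B' ∈ sem9 C, ¬ B' ⊂ B) ∧
    d ∈ Qg9 B ∧ d ∉ Qs9 C ∧ ¬ Qg9 B ⊆ Qs9 C := by
  intro C B
  have hsem : B ∈ sem9 C := by
    constructor
    · intro p hp; left; exact hp
    · intro x hx; exact ⟨d, by right; have hx' : x = c := hx; subst hx'; rfl⟩
  refine ⟨hsem, ?_, ⟨c, by right; rfl⟩, ?_, ?_⟩
  · rintro B' ⟨h1, h2⟩ ⟨hsub, hne⟩
    apply hne
    obtain ⟨e, he⟩ := h2 c rfl
    have heB := hsub he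
    have : e = d := by
      rcases heB with h | h
      · exact absurd (Prod.ext_iff.mp h).1 (Ne.symm hac)
      · exact (Prod.ext_iff.mp h).2
    subst this
    intro p hp
    rcases hp with h | h
    · exact h ▸ h1 rfl
    · exact h ▸ he
  · rintro ⟨z, hz⟩
    exact hbd (Prod.ext_iff.mp hz).2.symm
  · intro h
    rcases h ⟨c, by right; rfl⟩ with ⟨z, hz⟩
    exact hbd (Prod.ext_iff.mp hz).2.symm
end

section
/- In the two-source-relations example (mapping man(x) → Person(x) and woman(x) → Person(x), empty ontology), the empty query Q_g(x) = ⊥(x) is a sound source-to-target rewriting of Q_s(x) = woman(x) under the model-based semantics, and moreover it is the only sound one up to equivalence: any ontology query Q_g that is sound under the model-based semantics satisfies Q_g^B = ∅ for every model B arising in sem^C(I) for some C. -/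
/-- A source database: unary relations man^C and woman^C over the countably
infinite set ℕ of constants. -/
structure SrcDB10 where
  man : Set ℕ
  woman : Set ℕ

/-- sem^C(I): models (unary relations Person^B) with man^C ∪ woman^C ⊆ Person^B,
induced by the mapping man(x) → Person(x), woman(x) → Person(x) and empty TBox. -/
def sem10 (C : SrcDB10) : Set (Set ℕ) :=
  {P | C.man ∪ C.woman ⊆ P}

/-- the empty query ⊥ is a sound s-to-t rewriting of
Q_s(x) = woman(x) under the model-based semantics, and any monotone and generic
ontology query Q_g sound under the model-based semantics is empty on every
model arising in sem^C(I) for some C. -/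
theorem bottom_only_sound_rewriting :
    -- soundness of the bottom query Q_g(x) = ⊥(x):
    ((∀ C : SrcDB10, ∀ P ∈ sem10 C, (∅ : Set ℕ) ⊆ C.woman) ∧
    -- uniqueness up to equivalence:
    ∀ Qg : Set ℕ → Set ℕ,
      Monotone Qg →
      (∀ π : Equiv.Perm ℕ, ∀ P : Set ℕ, Qg ((π : ℕ → ℕ) '' P) = (π : ℕ → ℕ) '' Qg P) →
      (∀ C : SrcDB10, ∀ P ∈ sem10 C, Qg P ⊆ C.woman) →
      ∀ P : Set ℕ, (∃ C : SrcDB10, P ∈ sem10 C) → Qg P = ∅) := by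
  refine ⟨fun _ _ _ => Set.empty_subset _, fun Qg _ _ hs P _ => ?_⟩
  have h := hs ⟨P, ∅⟩ P (by simp [sem10])
  exact Set.subset_empty_iff.mp h
end

section
/- In the man/woman example, Q_g(x) = Person(x) is an optimal complete source-to-target rewriting of Q_s(x) = woman(x): it is complete, and there is no ontology query Q'_g (monotone and generic) that is a complete source-to-target rewriting of Q_s and is properly contained in Q_g (i.e., Q'_g^B ⊆ Person^B for all models B, with strict inclusion for at least one model B). -/
/-- A source database: finite unary relations man^C and woman^C over the
countably infinite set ℕ of constants. -/
structure SrcDB12 where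
  man : Finset ℕ
  woman : Finset ℕ

/-- sem^C(I): models Person^B ⊆ Const with man^C ∪ woman^C ⊆ Person^B. -/
def sem12 (C : SrcDB12) : Set (Set ℕ) :=
  {P | (↑C.man ∪ ↑C.woman : Set ℕ) ⊆ P}

/-- Q_g(x) = Person(x) is an optimal complete s-to-t rewriting of
Q_s(x) = woman(x): it is complete, and no monotone generic ontology query that
is a complete s-to-t rewriting of Q_s is properly contained in it. -/
theorem person_optimal_complete_rewriting :
    -- completeness of Q_g(x) = Person(x):
    (∀ C : SrcDB12, ∀ P ∈ sem12 C, (↑C.woman : Set ℕ) ⊆ P) ∧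
    -- optimality:
    ¬ ∃ Qg' : Set ℕ → Set ℕ,
        Monotone Qg' ∧
        (∀ π : Equiv.Perm ℕ, ∀ P : Set ℕ,
          Qg' ((π : ℕ → ℕ) '' P) = (π : ℕ → ℕ) '' Qg' P) ∧
        (∀ C : SrcDB12, ∀ P ∈ sem12 C, (↑C.woman : Set ℕ) ⊆ Qg' P) ∧
        (∀ P : Set ℕ, Qg' P ⊆ P) ∧
        (∃ P : Set ℕ, Qg' P ⊂ P) := by
  constructor
  · intro C P hP x hx
    exact hP (Or.inr hx)
  · rintro ⟨Qg', -, -, hcomp, hsub, P, hlt⟩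
    apply hlt.not_subset
    intro x hx
    have := hcomp ⟨∅, {x}⟩ P (by
      simp [sem12, Set.subset_def, hx])
    exact this (by simp)
end

section
/- The forward direction of the non-completeness characterization: if there exist a valuation v of D_{Q_s} and a model B ∈ sem^{v(D_{Q_s})}(I) with v(tup(Q_s)) ∉ Q_g^B, then Q_g is not a complete source-to-target rewriting of Q_s with respect to I, because v(tup(Q_s)) ∈ Q_s^{v(D_{Q_s})} always holds (the valuation itself is a homomorphism from D_{Q_s} to v(D_{Q_s})). -/
namespace Stmt14

variable {Const Null Rel Mdl : Type*}

/-- Values are constants or labeled nulls. -/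
abbrev Val (Const Null : Type*) := Const ⊕ Null

/-- A fact: a relation symbol with a tuple of values.  An instance is a set of facts. -/
abbrev Fact (Const Null Rel : Type*) := Rel × List (Val Const Null)

abbrev Inst (Const Null Rel : Type*) := Set (Fact Const Null Rel)

/-- The function on values induced by a valuation `v : Null → Const`. -/
def valFun (v : Null → Const) : Val Const Null → Val Const Null :=
  Sum.elim Sum.inl (fun n => Sum.inl (v n))

/-- Apply a function on values to a fact. -/
def applyFact (h : Val Const Null → Val Const Null) (f : Fact Const Null Rel) :
    Fact Const Null Rel :=
  (f.1, f.2.map h)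

/-- Apply a valuation to an instance. -/
def applyInst (h : Val Const Null → Val Const Null) (D : Inst Const Null Rel) :
    Inst Const Null Rel :=
  applyFact h '' D

/-- A ground instance: every value occurring in it is a constant. -/
def Ground (C : Inst Const Null Rel) : Prop :=
  ∀ f ∈ C, ∀ x ∈ f.2, ∃ c : Const, x = Sum.inl c

/-- A homomorphism from instance `D` to instance `C`: a map on values fixing
constants and sending every fact of `D` into `C`. -/
def Hom (h : Val Const Null → Val Const Null) (D C : Inst Const Null Rel) : Prop :=
  (∀ c : Const, h (Sum.inl c) = Sum.inl c) ∧ ∀ f ∈ D, applyFact h f ∈ C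

/-- Evaluation of the conjunctive query with canonical instance `D` and head
tuple `tup` on a source instance `C`. -/
def QsEval (D : Inst Const Null Rel) (tup : List (Val Const Null))
    (C : Inst Const Null Rel) : Set (List (Val Const Null)) :=
  {l | ∃ h, Hom h D C ∧ l = tup.map h}

/-- forward direction of the non-completeness characterization,
together with the fact that v(tup(Q_s)) ∈ Q_s^{v(D_{Q_s})} always holds
(a valuation is itself a homomorphism from D_{Q_s} to v(D_{Q_s})). -/
theorem not_complete_of_valuation
    (satO : Mdl → Prop)
    (satM : Inst Const Null Rel → Mdl → Prop)
    (satM_antitone : ∀ (C C' : Inst Const Null Rel) (B : Mdl),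
      C' ⊆ C → satM C B → satM C' B)
    (sem : Inst Const Null Rel → Set Mdl)
    (hsem : ∀ C B, B ∈ sem C ↔ satO B ∧ satM C B)
    (D : Inst Const Null Rel)
    (tup : List (Val Const Null))
    (Qg : Mdl → Set (List (Val Const Null)))
    (v : Null → Const) (B : Mdl)
    (hB : B ∈ sem (applyInst (valFun v) D))
    (hnot : tup.map (valFun v) ∉ Qg B) :
    (tup.map (valFun v) ∈ QsEval D tup (applyInst (valFun v) D)) ∧
    ¬ ∀ (C : Inst Const Null Rel), Ground C →
        ∀ B' ∈ sem C, QsEval D tup C ⊆ Qg B' := by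
  have hmem : tup.map (valFun v) ∈ QsEval D tup (applyInst (valFun v) D) := by
    refine ⟨valFun v, ⟨fun c => rfl, fun f hf => ⟨f, hf, rfl⟩⟩, rfl⟩
  refine ⟨hmem, fun hall => ?_⟩
  have hground : Ground (applyInst (valFun v) D) := by
    rintro f ⟨g, hg, rfl⟩ x hx
    simp only [applyFact, List.mem_map] at hx
    obtain ⟨y, hy, rfl⟩ := hx
    cases y with
    | inl c => exact ⟨c, rfl⟩
    | inr n => exact ⟨v n, rfl⟩
  exact hnot (hall _ hground B hB hmem)

end Stmt14
end
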